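/- Let M be a real symmetric n×n matrix of the form M = k·I + A where A is symmetric with zero diagonal and entries in {0, 1, -1}. Suppose -k is an eigenvalue of A of multiplicity at least n - N, where n ≥ 2N + 1. If k is an integer, then k² ≤ 2N²/(N+1). -/

import Mathlib

lemma integer_k_square_bound_aux (nr Nr mr T x : ℝ) (hx : 0 ≤ x) (hT0 : 0 ≤ T)
    (hTb : T ≤ nr ^ 2 - nr)
    (hmain : mr ^ 2 * x ≤ (nr - mr) * (T - mr * x))
    (hmR : nr - Nr ≤ mr) (hmn : mr ≤ nr) (hn : 2 * Nr + 1 ≤ nr) (hN0 : 0 ≤ Nr)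
    (hNcase : Nr = 0 ∨ 1 ≤ Nr) :
    x ≤ 2 * Nr ^ 2 / (Nr + 1) := by
  have hnpos : 0 < nr := by linarith
  have hnm0 : 0 ≤ nr - mr := by linarith
  have hnm : nr - mr ≤ Nr := by linarith
  have h1 : mr * nr * x ≤ (nr - mr) * T := by nlinarith
  have h2 : (nr - mr) * T ≤ Nr * (nr ^ 2 - nr) := by nlinarith
  have h12 : mr * nr * x ≤ Nr * (nr - 1) * nr := by nlinarith [le_trans h1 h2]
  have h3 : mr * x ≤ Nr * (nr - 1) := by nlinarith
  have h4 : (nr - Nr) * x ≤ Nr * (nr - 1) :=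
    le_trans (by nlinarith) h3
  rw [le_div_iff₀ (by linarith : (0 : ℝ) < Nr + 1)]
  rcases hNcase with h | h
  · subst h
    nlinarith [mul_nonneg hx (by linarith : (0 : ℝ) ≤ nr - 1)]
  · have hP : 0 ≤ Nr * (Nr - 1) * (nr - 2 * Nr - 1) :=
      mul_nonneg (mul_nonneg hN0 (by linarith)) (by linarith)
    have hnN : (0 : ℝ) < nr - Nr := by linarith
    nlinarith [mul_le_mul_of_nonneg_left h4 (by linarith : (0 : ℝ) ≤ Nr + 1), hP,
      mul_nonneg hx (le_of_lt hnN)]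

theorem integer_k_square_bound
    (n N : ℕ) (k : ℤ) (A : Matrix (Fin n) (Fin n) ℝ)
    (hAsymm : A.IsSymm)
    (hAdiag : ∀ i, A i i = 0)
    (hAentries : ∀ i j, i ≠ j → A i j = 0 ∨ A i j = 1 ∨ A i j = -1)
    (hmult : n - N ≤ Module.finrank ℝ (Module.End.eigenspace (Matrix.toLin' A) (-(k : ℝ))))
    (hn : 2 * N + 1 ≤ n) :
    ((k : ℝ)) ^ 2 ≤ 2 * (N : ℝ) ^ 2 / ((N : ℝ) + 1) := by
  classical
  have hA : A.IsHermitian := by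
    rw [Matrix.IsHermitian, Matrix.conjTranspose_eq_transpose_of_trivial]; exact hAsymm
  set μ : ℝ := -(k : ℝ) with hμ
  set lam : Fin n → ℝ := hA.eigenvalues with hlam
  set U : Matrix (Fin n) (Fin n) ℝ := (hA.eigenvectorUnitary : Matrix (Fin n) (Fin n) ℝ) with hU
  have hUU : U * star U = 1 := (Matrix.mem_unitaryGroup_iff).mp hA.eigenvectorUnitary.2
  have hsUU : star U * U = 1 := (Matrix.mem_unitaryGroup_iff').mp hA.eigenvectorUnitary.2
  have hspec : A = U * Matrix.diagonal lam * star U := by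
    have h := hA.spectral_theorem
    simpa [hU, hlam] using h
  -- trace of A is the sum of the eigenvalues and it is 0
  have htrA : ∑ i, lam i = 0 := by
    have h0 : A.trace = 0 := by simp [Matrix.trace, Matrix.diag, hAdiag]
    have h1 : A.trace = ∑ i, lam i := by
      rw [hspec, Matrix.trace_mul_cycle, hsUU, Matrix.one_mul, Matrix.trace_diagonal]
    rw [← h1, h0]
  -- trace of A*A is the sum of the squared eigenvalues
  have key : ∀ X : Matrix (Fin n) (Fin n) ℝ, star U * (U * X) = X := fun X => by
    rw [← Matrix.mul_assoc, hsUU, Matrix.one_mul]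
  have hAA : A * A = U * Matrix.diagonal (fun i => lam i ^ 2) * star U := by
    conv_lhs => rw [hspec]
    simp only [Matrix.mul_assoc, key]
    rw [← Matrix.mul_assoc (Matrix.diagonal lam), Matrix.diagonal_mul_diagonal]
    congr 2
    ext i
    ring
  have htrAA : (A * A).trace = ∑ i, lam i ^ 2 := by
    rw [hAA, Matrix.trace_mul_cycle, hsUU, Matrix.one_mul, Matrix.trace_diagonal]
  -- bound the trace of A*A by n^2 - n
  have htrAA' : (A * A).trace = ∑ i, ∑ j, A i j ^ 2 := by
    simp only [Matrix.trace, Matrix.diag, Matrix.mul_apply]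
    refine Finset.sum_congr rfl fun i _ => Finset.sum_congr rfl fun j _ => ?_
    rw [hAsymm.apply i j, sq]
  have hbound : ∑ i, lam i ^ 2 ≤ (n : ℝ) ^ 2 - n := by
    rw [← htrAA, htrAA']
    have h1 : ∀ i j : Fin n, A i j ^ 2 ≤ (if i = j then (0 : ℝ) else 1) := by
      intro i j
      by_cases h : i = j
      · simp [h, hAdiag]
      · rcases hAentries i j h with h' | h' | h' <;> simp [h, h'] <;> norm_num
    calc ∑ i, ∑ j, A i j ^ 2 ≤ ∑ i : Fin n, ∑ j : Fin n, (if i = j then (0 : ℝ) else 1) :=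
          Finset.sum_le_sum fun i _ => Finset.sum_le_sum fun j _ => h1 i j
      _ = ∑ i : Fin n, ((n : ℝ) - 1) := by
          refine Finset.sum_congr rfl fun i _ => ?_
          have : ∑ j : Fin n, (if i = j then (0 : ℝ) else 1)
              = ∑ j : Fin n, ((1 : ℝ) - if i = j then 1 else 0) := by
            refine Finset.sum_congr rfl fun j _ => ?_
            by_cases h : i = j <;> simp [h]
          rw [this, Finset.sum_sub_distrib]
          simp
      _ = (n : ℝ) ^ 2 - n := by
          rw [Finset.sum_const]
          simp [Finset.card_univ]
          ring
  -- multiplicity computation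
  set S : Finset (Fin n) := Finset.univ.filter (fun i => lam i = μ) with hS
  set m : ℕ := S.card with hm
  have hmn : m ≤ n := le_trans (Finset.card_le_univ S) (by simp)
  set B : Matrix (Fin n) (Fin n) ℝ := A - μ • 1 with hB
  have hBspec : B = U * Matrix.diagonal (fun i => lam i - μ) * star U := by
    have h2 : Matrix.diagonal (fun i => lam i - μ)
        = Matrix.diagonal lam - μ • (1 : Matrix (Fin n) (Fin n) ℝ) := by
      ext i j
      by_cases h : i = j <;>
        simp [Matrix.diagonal_apply, Matrix.sub_apply, Matrix.smul_apply, Matrix.one_apply, h]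
    rw [hB, h2, Matrix.mul_sub, Matrix.sub_mul, ← hspec]
    congr 1
    rw [Matrix.mul_smul, Matrix.smul_mul, Matrix.mul_one, hUU]
  have hUdet : IsUnit U.det ∧ IsUnit (star U).det := by
    constructor
    · exact IsUnit.of_mul_eq_one _ (by rw [← Matrix.det_mul, hUU, Matrix.det_one])
    · exact IsUnit.of_mul_eq_one _ (by rw [← Matrix.det_mul, hsUU, Matrix.det_one])
  have hrankB : B.rank = n - m := by
    have h1 : B.rank = (Matrix.diagonal (fun i => lam i - μ)).rank := by
      rw [hBspec, Matrix.rank_mul_eq_left_of_isUnit_det _ _ hUdet.2,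
        Matrix.rank_mul_eq_right_of_isUnit_det _ _ hUdet.1]
    rw [h1, Matrix.rank_diagonal]
    have h2 : ∀ i, lam i - μ ≠ 0 ↔ ¬ (lam i = μ) := fun i => sub_ne_zero
    rw [Fintype.card_subtype]
    have h3 : Finset.univ.filter (fun i => lam i - μ ≠ 0)
        = Finset.univ.filter (fun i => ¬ (lam i = μ)) := by
      refine Finset.filter_congr fun i _ => by rw [h2 i]
    rw [h3, show Finset.univ.filter (fun i => ¬ (lam i = μ)) = Sᶜ by
        rw [hS, Finset.compl_filter]]
    rw [Finset.card_compl, Fintype.card_fin]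
  -- the eigenspace is the kernel of B
  have hker : Module.End.eigenspace (Matrix.toLin' A) μ = LinearMap.ker (Matrix.toLin' B) := by
    rw [Module.End.eigenspace_def]
    congr 1
    rw [hB]
    ext v i
    simp [Matrix.toLin'_apply, Matrix.sub_mulVec, Matrix.smul_mulVec]
  have hfinrank : Module.finrank ℝ (Module.End.eigenspace (Matrix.toLin' A) μ) = m := by
    rw [hker]
    have h5 := LinearMap.finrank_range_add_finrank_ker (Matrix.toLin' B)
    have h6 : Module.finrank ℝ (Fin n → ℝ) = n := Module.finrank_fin_fun ℝ
    have h7 : Module.finrank ℝ (LinearMap.range (Matrix.toLin' B)) = B.rank := by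
      have he : Matrix.toLin' B = B.mulVecLin := LinearMap.ext fun v => by
        simp [Matrix.toLin'_apply]
      rw [Matrix.rank, he]
    rw [h6, h7, hrankB] at h5
    omega
  have hmultm : n - N ≤ m := by rw [hfinrank] at hmult; exact hmult
  -- split the sums
  have hsumS : ∑ i ∈ S, lam i = (m : ℝ) * μ := by
    rw [Finset.sum_congr rfl (fun i hi => (Finset.mem_filter.mp hi).2 : ∀ i ∈ S, lam i = μ)]
    rw [Finset.sum_const, nsmul_eq_mul]
  have hsumS2 : ∑ i ∈ S, lam i ^ 2 = (m : ℝ) * μ ^ 2 := by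
    rw [Finset.sum_congr rfl (fun i hi => by
      rw [(Finset.mem_filter.mp hi).2] : ∀ i ∈ S, lam i ^ 2 = μ ^ 2)]
    rw [Finset.sum_const, nsmul_eq_mul]
  have hsplit : ∑ i ∈ Sᶜ, lam i = -(m : ℝ) * μ := by
    have := Finset.sum_add_sum_compl S lam
    rw [hsumS, htrA] at this
    linarith
  have hsplit2 : ∑ i ∈ Sᶜ, lam i ^ 2 = (∑ i, lam i ^ 2) - (m : ℝ) * μ ^ 2 := by
    have := Finset.sum_add_sum_compl S (fun i => lam i ^ 2)
    rw [hsumS2] at this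
    linarith
  -- Cauchy-Schwarz
  have hCS : (∑ i ∈ Sᶜ, lam i) ^ 2 ≤ (Sᶜ.card : ℝ) * ∑ i ∈ Sᶜ, lam i ^ 2 :=
    sq_sum_le_card_mul_sum_sq
  have hcardc : (Sᶜ.card : ℝ) = (n : ℝ) - m := by
    rw [Finset.card_compl]
    simp only [Fintype.card_fin]
    rw [Nat.cast_sub hmn]
  -- assemble the real inequality
  set T : ℝ := ∑ i, lam i ^ 2 with hT
  have hT0 : 0 ≤ T := Finset.sum_nonneg fun i _ => sq_nonneg _
  have hmain : ((m : ℝ) * μ) ^ 2 ≤ ((n : ℝ) - m) * (T - (m : ℝ) * μ ^ 2) := by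
    rw [hsplit, hsplit2, hcardc] at hCS
    calc ((m : ℝ) * μ) ^ 2 = (-(m : ℝ) * μ) ^ 2 := by ring
      _ ≤ ((n : ℝ) - m) * (T - (m : ℝ) * μ ^ 2) := hCS
  have hmain' : ((m : ℝ)) ^ 2 * (k : ℝ) ^ 2 ≤ ((n : ℝ) - m) * (T - (m : ℝ) * (k : ℝ) ^ 2) := by
    have hμ2 : μ ^ 2 = (k : ℝ) ^ 2 := by rw [hμ]; ring
    rw [mul_pow, hμ2] at hmain
    exact hmain
  have hmR : (n : ℝ) - N ≤ (m : ℝ) := by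
    have hNn : N ≤ n := by omega
    have := (Nat.cast_le (α := ℝ)).2 hmultm
    rw [Nat.cast_sub hNn] at this
    exact this
  have hmnR : (m : ℝ) ≤ n := (Nat.cast_le (α := ℝ)).2 hmn
  have hnR : 2 * (N : ℝ) + 1 ≤ n := by exact_mod_cast hn
  have hN0' : (0 : ℝ) ≤ N := Nat.cast_nonneg N
  have hNcase : (N : ℝ) = 0 ∨ 1 ≤ (N : ℝ) := by
    rcases Nat.eq_zero_or_pos N with h | h
    · left; simp [h]
    · right; exact_mod_cast h
  exact integer_k_square_bound_aux (n : ℝ) (N : ℝ) (m : ℝ) T ((k : ℝ) ^ 2) (sq_nonneg _)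
    hT0 hbound hmain' hmR hmnR hnR hN0' hNcase
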